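/- Let (x, y, z) ∈ M, identified as an abelian group with Q ⊕ I[G] ⊕ P. If (x, y, z) is fixed by every element of G34, then y = N34·y1 − p·y2 for some y1 ∈ Z[G12] and y2 ∈ Z[G] satisfying ε(y2) = p·ε(y1), where N34 = Σ_{g ∈ G34} g ∈ Z[G] and ε : Z[G] → Z is the augmentation map. -/

import Mathlib

open MonoidAlgebra

set_option maxHeartbeats 1000000
set_option synthInstance.maxHeartbeats 400000

noncomputable section

/-! ## Generic (unbundled) group-cohomology notions in low degree -/

/-- `f : G → A` is a 1-cocycle for the (unbundled) action `act`. -/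
def IsOneCocycle {G : Type*} [Group G] {A : Type*} [AddCommGroup A]
    (act : G → A → A) (f : G → A) : Prop :=
  ∀ g h : G, f (g * h) = act g (f h) + f g

/-- `f : G → A` is a 1-coboundary for the (unbundled) action `act`. -/
def IsOneCoboundary {G : Type*} [Group G] {A : Type*} [AddCommGroup A]
    (act : G → A → A) (f : G → A) : Prop :=
  ∃ a : A, ∀ g : G, f g = act g a - a

/-- `f : G → G → A` is a 2-coboundary for the (unbundled) action `act`. -/
def IsTwoCoboundary {G : Type*} [Group G] {A : Type*} [AddCommGroup A]
    (act : G → A → A) (f : G → G → A) : Prop :=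
  ∃ c : G → A, ∀ g h : G, f g h = act g (c h) - c (g * h) + c g

/-- restriction of an (unbundled) action to a subgroup. -/
def resAct {G : Type*} [Group G] {A : Type*} (H : Subgroup G) (act : G → A → A) :
    H → A → A := fun h => act (h : G)

/-! ## Augmentation ideal for a general group -/

/-- the augmentation map `Z[G] → Z`. -/
def augGen (G : Type*) [Group G] : MonoidAlgebra ℤ G →+* ℤ :=
  (MonoidAlgebra.lift ℤ ℤ G 1).toRingHom

/-- the augmentation ideal `I[G] ⊆ Z[G]`. -/
def IGen (G : Type*) [Group G] : Ideal (MonoidAlgebra ℤ G) := RingHom.ker (augGen G)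

/-- the action of `G` on `I[G]` by left multiplication. -/
def actIGen (G : Type*) [Group G] (g : G) (y : ↥(IGen G)) : ↥(IGen G) :=
  ⟨of ℤ G g * y.val, by
    have h0 : augGen G y.val = 0 := y.2
    simp [IGen, RingHom.mem_ker, map_mul, h0]⟩

/-- the distinguished 1-cocycle `d_H : H → I[G]`, `h ↦ h - 1`. -/
def dGen {G : Type*} [Group G] (H : Subgroup G) (h : H) : ↥(IGen G) :=
  ⟨of ℤ G (h : G) - 1, by simp [IGen, RingHom.mem_ker, map_sub, augGen]⟩

/-! ## The groups of the paper -/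

/-- the elementary abelian group `G₁₂` of order `p²`. -/
abbrev G12t (p : ℕ) := Multiplicative (ZMod p × ZMod p)
/-- a cyclic group of order `p`. -/
abbrev Cpt (p : ℕ) := Multiplicative (ZMod p)
/-- the elementary abelian group `G = ⟨σ₁⟩ × ⟨σ₂⟩ × ⟨σ₃⟩ × ⟨σ₄⟩` of order `p⁴`. -/
abbrev Gp (p : ℕ) := Multiplicative (ZMod p × ZMod p × ZMod p × ZMod p)

def t1 (p : ℕ) : G12t p := Multiplicative.ofAdd (1, 0)
def t2 (p : ℕ) : G12t p := Multiplicative.ofAdd (0, 1)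
def c1g (p : ℕ) : Cpt p := Multiplicative.ofAdd 1
def s1 (p : ℕ) : Gp p := Multiplicative.ofAdd (1, 0, 0, 0)
def s2 (p : ℕ) : Gp p := Multiplicative.ofAdd (0, 1, 0, 0)
def s3 (p : ℕ) : Gp p := Multiplicative.ofAdd (0, 0, 1, 0)
def s4 (p : ℕ) : Gp p := Multiplicative.ofAdd (0, 0, 0, 1)

/-- the group ring `Z[G₁₂]`. -/
abbrev R12 (p : ℕ) := MonoidAlgebra ℤ (G12t p)
/-- the group ring `Z[⟨σ⟩]` of a cyclic group of order `p`. -/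
abbrev RCp (p : ℕ) := MonoidAlgebra ℤ (Cpt p)
/-- the group ring `Z[G]`. -/
abbrev RG (p : ℕ) := MonoidAlgebra ℤ (Gp p)

/-- the quotient map `G → G₁₂ = G/G₃₄`. -/
def π12 (p : ℕ) : Gp p →* G12t p :=
  AddMonoidHom.toMultiplicative
    { toFun := fun v => (v.1, v.2.1), map_zero' := rfl, map_add' := fun _ _ => rfl }

/-- the quotient map `G → ⟨σ₃⟩ = G/⟨σ₁,σ₂,σ₄⟩`. -/
def π3 (p : ℕ) : Gp p →* Cpt p :=
  AddMonoidHom.toMultiplicative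
    { toFun := fun v => v.2.2.1, map_zero' := rfl, map_add' := fun _ _ => rfl }

/-- the quotient map `G → ⟨σ₄⟩ = G/⟨σ₁,σ₂,σ₃⟩`. -/
def π4 (p : ℕ) : Gp p →* Cpt p :=
  AddMonoidHom.toMultiplicative
    { toFun := fun v => v.2.2.2, map_zero' := rfl, map_add' := fun _ _ => rfl }

/-- the inclusion `G₁₂ → G`. -/
def emb12 (p : ℕ) : G12t p →* Gp p :=
  AddMonoidHom.toMultiplicative
    { toFun := fun v => (v.1, v.2, 0, 0), map_zero' := rfl,
      map_add' := fun _ _ => by ext <;> simp }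

/-- the subgroup `G₁₂ = ⟨σ₁, σ₂⟩ ≤ G`. -/
def G12sub (p : ℕ) : Subgroup (Gp p) := Subgroup.closure {s1 p, s2 p}
/-- the subgroup `G₃₄ = ⟨σ₃, σ₄⟩ ≤ G`. -/
def G34sub (p : ℕ) : Subgroup (Gp p) := Subgroup.closure {s3 p, s4 p}

/-! ## The lattice `A₂(G₁₂)` and its distinguished elements -/

/-- the map `Z[G₁₂]·d₁ ⊕ Z[G₁₂]·d₂ → I[G₁₂] ⊆ Z[G₁₂]`, `dᵢ ↦ σᵢ - 1`. -/
def d12map (p : ℕ) : (R12 p × R12 p) →ₗ[R12 p] R12 p :=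
  (LinearMap.toSpanSingleton (R12 p) (R12 p) (of ℤ (G12t p) (t1 p) - 1)).comp
      (LinearMap.fst (R12 p) (R12 p) (R12 p)) +
  (LinearMap.toSpanSingleton (R12 p) (R12 p) (of ℤ (G12t p) (t2 p) - 1)).comp
      (LinearMap.snd (R12 p) (R12 p) (R12 p))

/-- the lattice `A₂(G₁₂)`, the kernel of `Z[G₁₂]·d₁ ⊕ Z[G₁₂]·d₂ → I[G₁₂]`. -/
def A2G12 (p : ℕ) : Submodule (R12 p) (R12 p × R12 p) := LinearMap.ker (d12map p)

/-- `u₁₂ = (σ₂-1)d₁ - (σ₁-1)d₂` as an element of `Z[G₁₂]·d₁ ⊕ Z[G₁₂]·d₂`. -/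
def u12raw (p : ℕ) : R12 p × R12 p :=
  (of ℤ (G12t p) (t2 p) - 1, -(of ℤ (G12t p) (t1 p) - 1))

/-- the norm element `N = 1 + g + ⋯ + g^(p-1)` of a group ring. -/
def NN (p : ℕ) {G : Type*} [CommGroup G] (g : G) : MonoidAlgebra ℤ G :=
  ∑ k ∈ Finset.range p, of ℤ G g ^ k

/-- `b₁ = N₁·d₁`. -/
def b1raw (p : ℕ) : R12 p × R12 p := (NN p (t1 p), 0)
/-- `b₂ = N₂·d₂`. -/
def b2raw (p : ℕ) : R12 p × R12 p := (0, NN p (t2 p))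

lemma ofAdd_pow_p (p : ℕ) {A : Type*} [AddCommGroup A] (a : A) (h : p • a = 0) :
    (Multiplicative.ofAdd a) ^ p = 1 := by
  rw [← ofAdd_nsmul, h]; rfl

lemma zmod_p_smul (p : ℕ) (x : ZMod p) : p • x = 0 := by
  rw [nsmul_eq_mul, ZMod.natCast_self, zero_mul]

lemma t1_pow_p (p : ℕ) : (t1 p) ^ p = 1 := by
  refine ofAdd_pow_p p _ ?_
  rw [Prod.smul_mk, zmod_p_smul, zmod_p_smul]; rfl

lemma t2_pow_p (p : ℕ) : (t2 p) ^ p = 1 := by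
  refine ofAdd_pow_p p _ ?_
  rw [Prod.smul_mk, zmod_p_smul, zmod_p_smul]; rfl

lemma c1g_pow_p (p : ℕ) : (c1g p) ^ p = 1 := by
  refine ofAdd_pow_p p _ (zmod_p_smul p _)

lemma NN_mul (p : ℕ) {G : Type*} [CommGroup G] (g : G) (h : g ^ p = 1) :
    NN p g * (of ℤ G g - 1) = 0 := by
  rw [NN, geom_sum_mul, ← map_pow, h, map_one, sub_self]

lemma u12raw_mem (p : ℕ) : u12raw p ∈ A2G12 p := by
  simp only [A2G12, LinearMap.mem_ker, d12map, LinearMap.add_apply, LinearMap.comp_apply,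
    LinearMap.fst_apply, LinearMap.snd_apply, LinearMap.toSpanSingleton_apply, u12raw,
    smul_eq_mul]
  ring

lemma b1raw_mem (p : ℕ) : b1raw p ∈ A2G12 p := by
  simp only [A2G12, LinearMap.mem_ker, d12map, LinearMap.add_apply, LinearMap.comp_apply,
    LinearMap.fst_apply, LinearMap.snd_apply, LinearMap.toSpanSingleton_apply, b1raw,
    smul_eq_mul, zero_mul, add_zero]
  exact NN_mul p _ (t1_pow_p p)

lemma b2raw_mem (p : ℕ) : b2raw p ∈ A2G12 p := by
  simp only [A2G12, LinearMap.mem_ker, d12map, LinearMap.add_apply, LinearMap.comp_apply,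
    LinearMap.fst_apply, LinearMap.snd_apply, LinearMap.toSpanSingleton_apply, b2raw,
    smul_eq_mul, zero_mul, zero_add]
  exact NN_mul p _ (t2_pow_p p)

/-- `u₁₂` as an element of `A₂(G₁₂)`. -/
def u12e (p : ℕ) : ↥(A2G12 p) := ⟨u12raw p, u12raw_mem p⟩
/-- `b₁` as an element of `A₂(G₁₂)`. -/
def b1e (p : ℕ) : ↥(A2G12 p) := ⟨b1raw p, b1raw_mem p⟩
/-- `b₂` as an element of `A₂(G₁₂)`. -/
def b2e (p : ℕ) : ↥(A2G12 p) := ⟨b2raw p, b2raw_mem p⟩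

/-- the action of `G₁₂` on `A₂(G₁₂)`. -/
def actA2 (p : ℕ) (x : G12t p) (v : ↥(A2G12 p)) : ↥(A2G12 p) :=
  of ℤ (G12t p) x • v

/-! ## The cyclic lattice `A₂(⟨σ⟩)` -/

/-- the map `Z[⟨σ⟩]·d → I[⟨σ⟩]`, `d ↦ σ - 1`. -/
def dcmap (p : ℕ) : RCp p →ₗ[RCp p] RCp p :=
  LinearMap.toSpanSingleton (RCp p) (RCp p) (of ℤ (Cpt p) (c1g p) - 1)

/-- the lattice `A₂(⟨σ⟩)` for a cyclic group of order `p`. -/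
def A2C (p : ℕ) : Submodule (RCp p) (RCp p) := LinearMap.ker (dcmap p)

/-- the norm element `N = 1 + σ + ⋯ + σ^(p-1)` as an element of `A₂(⟨σ⟩)`. -/
def NCe (p : ℕ) : ↥(A2C p) :=
  ⟨NN p (c1g p), by
    simp only [A2C, LinearMap.mem_ker, dcmap, LinearMap.toSpanSingleton_apply, smul_eq_mul]
    exact NN_mul p _ (c1g_pow_p p)⟩

/-- the action of `G` on `A₂(⟨σⱼ⟩)` through a projection `π : G → ⟨σⱼ⟩`. -/
def actCvia (p : ℕ) (π : Gp p →* Cpt p) (g : Gp p) (v : ↥(A2C p)) : ↥(A2C p) :=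
  of ℤ (Cpt p) (π g) • v

/-! ## The explicit canonical 2-cocycles -/

/-- the elements `u_{m,n} ∈ A₂(G₁₂)` (equation (13) of the paper). -/
def umn (p : ℕ) (m1 m2 n1 n2 : ℕ) : ↥(A2G12 p) :=
  (-(of ℤ (G12t p) (t1 p ^ m1) * ∑ j ∈ Finset.range n1, ∑ i ∈ Finset.range m2,
      of ℤ (G12t p) (t1 p ^ i * t2 p ^ j))) • u12e p +
  (of ℤ (G12t p) (t1 p ^ n1) * ∑ j ∈ Finset.range n2, ∑ i ∈ Finset.range m1,
      of ℤ (G12t p) (t1 p ^ i * t2 p ^ j)) • u12e p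

/-- the explicit 2-cocycle `c₁₂` representing the canonical class `[c_{G₁₂}]`. -/
def c12coc (p : ℕ) (x y : G12t p) : ↥(A2G12 p) :=
  let m1 := (Multiplicative.toAdd x).1.val
  let m2 := (Multiplicative.toAdd x).2.val
  let n1 := (Multiplicative.toAdd y).1.val
  let n2 := (Multiplicative.toAdd y).2.val
  of ℤ (G12t p) (t1 p ^ m1) • umn p 0 m2 n1 0 +
    ((m1 + n1) / p) • b1e p +
    ((m2 + n2) / p) • (of ℤ (G12t p) (t1 p ^ ((m1 + n1) % p)) • b2e p)

/-- the explicit 2-cocycle representing the canonical class of a cyclic group of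
order `p` with coefficients in `A₂(⟨σ⟩)`. -/
def ccyc (p : ℕ) (x y : Cpt p) : ↥(A2C p) :=
  if p ≤ (Multiplicative.toAdd x).val + (Multiplicative.toAdd y).val then NCe p else 0

/-! ## The lattice `Q = A₂(G₁₂) ⊕ K₃ ⊕ K₄` -/

/-- `K_j = A₂(⟨σⱼ⟩) ⊕ Z[⟨σⱼ⟩]`. -/
abbrev Kc (p : ℕ) := ↥(A2C p) × RCp p

/-- the carrier of the `G`-lattice `Q = A₂(G₁₂) ⊕ K₃ ⊕ K₄`. -/
abbrev Qc (p : ℕ) := ↥(A2G12 p) × Kc p × Kc p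

/-- the action of `G` on `Q`: `G₁₂` acts naturally on `A₂(G₁₂)` and trivially on
`K₃`, `K₄`; `⟨σⱼ⟩` acts naturally on `K_j` and trivially elsewhere. -/
def actQ (p : ℕ) (g : Gp p) (q : Qc p) : Qc p :=
  (of ℤ (G12t p) (π12 p g) • q.1,
   (of ℤ (Cpt p) (π3 p g) • q.2.1.1, of ℤ (Cpt p) (π3 p g) * q.2.1.2),
   (of ℤ (Cpt p) (π4 p g) • q.2.2.1, of ℤ (Cpt p) (π4 p g) * q.2.2.2))

/-- the 2-cocycle `ω = inf(c₁₂) - inf(c₃) - inf(c₄)` with values in `Q`. -/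
def ωc (p : ℕ) (g g' : Gp p) : Qc p :=
  (c12coc p (π12 p g) (π12 p g'),
   (-(ccyc p (π3 p g) (π3 p g')), 0),
   (-(ccyc p (π4 p g) (π4 p g')), 0))

/-- the order of the restriction of `[ω]` to a subgroup `H ≤ G` in `H²(H, Q)`. -/
def nOrd (p : ℕ) (H : Subgroup (Gp p)) : ℕ :=
  sInf {n : ℕ | 0 < n ∧
    IsTwoCoboundary (resAct H (actQ p)) fun h h' => n • ωc p (h : Gp p) (h' : Gp p)}

/-! ## The augmentation ideal `I[G]` and the lattice `M_ω` -/

/-- the augmentation map `Z[G] → Z`. -/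
def aug (p : ℕ) : RG p →+* ℤ := (MonoidAlgebra.lift ℤ ℤ (Gp p) 1).toRingHom

/-- the augmentation ideal `I[G]`. -/
def IG (p : ℕ) : Ideal (RG p) := RingHom.ker (aug p)

/-- the action of `G` on `I[G]` by left multiplication. -/
def actIG (p : ℕ) (g : Gp p) (y : ↥(IG p)) : ↥(IG p) :=
  ⟨of ℤ (Gp p) g * y.val, by
    have h0 : aug p y.val = 0 := y.2
    simp [IG, RingHom.mem_ker, map_mul, h0]⟩

/-- the 1-cocycle `d_H : H → I[G]`, `h ↦ h - 1`. -/
def dH (p : ℕ) (H : Subgroup (Gp p)) (h : H) : ↥(IG p) :=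
  ⟨of ℤ (Gp p) (h : Gp p) - 1, by simp [IG, RingHom.mem_ker, map_sub, aug]⟩

/-- the carrier of the `G`-lattice `M_ω = Q ⊕ I[G]`. -/
abbrev Mc (p : ℕ) := Qc p × ↥(IG p)

/-- the `Q`-valued correction term of the twisted action on `M_ω`:
`θ(g, Σ a_{g'} g') = Σ a_{g'} ω(g, g')`; on `y ∈ I[G]` (so `Σ a_{g'} = 0` and
`y = Σ a_{g'} (g' - 1)`) this is the `Q`-component of `g·(0, y)`. -/
def θω (p : ℕ) (g : Gp p) (y : RG p) : Qc p :=
  Finsupp.sum y.coeff fun g' a => a • ωc p g g'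

/-- the twisted action of `G` on `M_ω = Q ⊕ I[G]`: `g(x,0) = (gx, 0)` and
`g(0, g'-1) = (ω(g,g'), g(g'-1))`, extended `Z`-linearly. -/
def actM (p : ℕ) (g : Gp p) (m : Mc p) : Mc p :=
  (actQ p g m.1 + θω p g m.2.val, actIG p g m.2)

/-! ## The map `π : A₂(G₁₂) → Z/pZ` -/

/-- the `G₁₂`-module homomorphism `π : A₂(G₁₂) → Z/pZ`, determined by
`π(x·u₁₂ + y·b₁ + z·b₂) = ε(x) mod p`; concretely it sends `v = (v₁, v₂)` to
`Σ_g v₁(g)·(exponent of σ₂ in g)`. -/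
def πmap (p : ℕ) (v : ↥(A2G12 p)) : ZMod p :=
  Finsupp.sum (v : R12 p × R12 p).1.coeff fun g a => (a : ZMod p) * (Multiplicative.toAdd g).2

/-! ## The set `𝓗` of subgroups, the cochains `v_H`, and the lattice `M` -/

/-- the set of subgroups `𝓗 = {G} ∪ {⟨τ, σ₃, σ₄⟩ : τ ∈ G₁₂}`. -/
def HH (p : ℕ) : Set (Subgroup (Gp p)) :=
  insert ⊤ {H | ∃ τ ∈ G12sub p, H = Subgroup.closure {τ, s3 p, s4 p}}

/-- the 1-cochain `v_H : H₁₂ → A₂(G₁₂)`, `v_H(h̄₁) = Σ_{h̄ ∈ H₁₂} c₁₂(h̄₁, h̄)`,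
here inflated to a function of `h̄₁ ∈ G₁₂`. -/
def vH (p : ℕ) (H : Subgroup (Gp p)) (x : G12t p) : ↥(A2G12 p) :=
  ∑ᶠ h' : ↥(H.map (π12 p)), c12coc p x (h' : G12t p)

/-- the 1-cochain `f_H : H → M_ω`, `f_H(h) = (z_H(h) - v_H(h̄), n_H·(h-1))`,
built from a choice of 1-cochain `z_H : H → K₃ ⊕ K₄`. -/
def fHof (p : ℕ) (H : Subgroup (Gp p)) (zH : H → Kc p × Kc p) (h : H) : Mc p :=
  ((-(vH p H (π12 p (h : Gp p))), (zH h).1, (zH h).2),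
   (nOrd p H) • dH p H h)

/-- the carrier of the permutation lattice `P = ⊕_{H ∈ 𝓗} Z[G/H]`. -/
abbrev Pc (p : ℕ) := ∀ H : ↥(HH p), ((Gp p ⧸ (H : Subgroup (Gp p))) →₀ ℤ)

/-- the carrier of the `G`-lattice `M = M_ω ⊕ P`. -/
abbrev MC (p : ℕ) := Mc p × Pc p

/-- the action of `G` on `M = M_ω ⊕ P`, twisted by a family of 1-cocycles
`f_H : H → M_ω` (`H ∈ 𝓗`): `g(x, 0) = (gx, 0)` and
`g(0, u_{gᵢH}) = (gⱼ·f_H(h), u_{gⱼH})` where `g·gᵢ = gⱼ·h`, `h ∈ H`, and the coset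
representatives are chosen by `Quotient.out`. -/
def actMFull (p : ℕ) (fH : ∀ H : ↥(HH p), (↥(H.val) → Mc p))
    (g : Gp p) (m : MC p) : MC p :=
  (actM p g m.1 +
     ∑ᶠ H : ↥(HH p), Finsupp.sum (m.2 H) fun c a =>
       a • actM p (Quotient.out (g • c))
         (fH H ⟨(Quotient.out (g • c))⁻¹ * (g * Quotient.out c), by
            rw [← QuotientGroup.eq, QuotientGroup.out_eq', ← smul_eq_mul,
              MulAction.Quotient.mk_smul_out]⟩),
   fun H => Finsupp.mapDomain (fun c => g • c) (m.2 H))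

/-- the map `π' : M → Z/pZ`, `(x₀, x₁, x₂, y, z) ↦ π(x₀)`. -/
def πmap' (p : ℕ) (m : MC p) : ZMod p := πmap p m.1.1.1

/-- the norm element `N₃₄ = Σ_{g ∈ G₃₄} g ∈ Z[G]`. -/
def N34 (p : ℕ) : RG p := ∑ᶠ g : ↥(G34sub p), of ℤ (Gp p) (g : Gp p)

/-- the augmentation map `Z[G₁₂] → Z`. -/
def aug12 (p : ℕ) : R12 p →+* ℤ := (MonoidAlgebra.lift ℤ ℤ (G12t p) 1).toRingHom

/-! ### Auxiliary lemmas for the proof of statement14 -/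

section Aux

set_option linter.unusedSectionVars false

variable (p : ℕ) [NeZero p]

/-- the embedding `(c,d) ↦ σ₃^c σ₄^d` on elements. -/
def e34 (v : ZMod p × ZMod p) : Gp p := Multiplicative.ofAdd (0, 0, v.1, v.2)

lemma s3_pow (j : ℕ) :
    s3 p ^ j = Multiplicative.ofAdd ((0 : ZMod p), (0 : ZMod p), (j : ZMod p), (0 : ZMod p)) := by
  rw [s3, ← ofAdd_nsmul]
  congr 1
  simp [Prod.smul_mk, nsmul_eq_mul]

lemma s4_pow (j : ℕ) :
    s4 p ^ j = Multiplicative.ofAdd ((0 : ZMod p), (0 : ZMod p), (0 : ZMod p), (j : ZMod p)) := by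
  rw [s4, ← ofAdd_nsmul]
  congr 1
  simp [Prod.smul_mk, nsmul_eq_mul]

lemma e34_eq_pow (v : ZMod p × ZMod p) : e34 p v = s3 p ^ v.1.val * s4 p ^ v.2.val := by
  rw [s3_pow, s4_pow, e34, ← ofAdd_add]
  congr 1
  simp [Prod.ext_iff, ZMod.natCast_rightInverse v.1, ZMod.natCast_rightInverse v.2]

lemma eq_e34_of_ker (g : Gp p) (h1 : π12 p g = 1) :
    g = e34 p ((Multiplicative.toAdd g).2.2.1, (Multiplicative.toAdd g).2.2.2) := by
  have h2 : (Multiplicative.toAdd g).1 = 0 ∧ (Multiplicative.toAdd g).2.1 = 0 := by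
    have := congrArg Multiplicative.toAdd h1
    exact Prod.mk.injEq _ _ _ _ ▸ (by simpa [π12, Prod.ext_iff] using this)
  have h3 : Multiplicative.toAdd g =
      ((0 : ZMod p), (0 : ZMod p), (Multiplicative.toAdd g).2.2.1,
        (Multiplicative.toAdd g).2.2.2) := by
    refine Prod.ext h2.1 (Prod.ext h2.2 rfl)
  exact congrArg Multiplicative.ofAdd h3

lemma e34_mem (v : ZMod p × ZMod p) : e34 p v ∈ G34sub p := by
  have h3 : s3 p ∈ G34sub p := Subgroup.subset_closure (Set.mem_insert _ _)
  have h4 : s4 p ∈ G34sub p := Subgroup.subset_closure (Set.mem_insert_of_mem _ rfl)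
  have h5 : s3 p ^ v.1.val * s4 p ^ v.2.val ∈ G34sub p := mul_mem (pow_mem h3 _) (pow_mem h4 _)
  rw [e34_eq_pow]
  exact h5

lemma G34sub_eq_ker : G34sub p = (π12 p).ker := by
  apply le_antisymm
  · rw [G34sub, Subgroup.closure_le]
    rintro x (rfl | rfl) <;> rfl
  · intro g hg
    have h1 : π12 p g = 1 := hg
    rw [eq_e34_of_ker p g h1]
    exact e34_mem p _

lemma s3_mem : s3 p ∈ G34sub p := Subgroup.subset_closure (Set.mem_insert _ _)
lemma s4_mem : s4 p ∈ G34sub p := Subgroup.subset_closure (Set.mem_insert_of_mem _ rfl)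

/-- the equivalence `(Z/p)² ≃ G₃₄`. -/
def equiv34 : (ZMod p × ZMod p) ≃ ↥(G34sub p) where
  toFun v := ⟨e34 p v, e34_mem p v⟩
  invFun h := ((Multiplicative.toAdd h.1).2.2.1, (Multiplicative.toAdd h.1).2.2.2)
  left_inv v := rfl
  right_inv h := by
    obtain ⟨g, hg⟩ := h
    rw [G34sub_eq_ker] at hg
    exact Subtype.ext (eq_e34_of_ker p g hg).symm

lemma N34_eq : N34 p = ∑ v : ZMod p × ZMod p, of ℤ (Gp p) (e34 p v) := by
  rw [N34, ← finsum_comp_equiv (equiv34 p)]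
  exact finsum_eq_sum_of_fintype _

lemma emb12_leftInv : ∀ w, π12 p (emb12 p w) = w := fun _ => rfl

lemma emb12_inj : Function.Injective (emb12 p) :=
  Function.LeftInverse.injective (emb12_leftInv p)

lemma aug_single (g : Gp p) (a : ℤ) : aug p (MonoidAlgebra.single g a) = a := by
  simp [aug, MonoidAlgebra.lift_single]

lemma aug12_single (g : G12t p) (a : ℤ) : aug12 p (MonoidAlgebra.single g a) = a := by
  simp [aug12, MonoidAlgebra.lift_single]

lemma aug_of (g : Gp p) : aug p (of ℤ (Gp p) g) = 1 := aug_single p g 1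

lemma aug_N34 : aug p (N34 p) = (p : ℤ) * (p : ℤ) := by
  rw [N34_eq, map_sum]
  simp only [aug_of]
  rw [Finset.sum_const, Finset.card_univ, Fintype.card_prod, ZMod.card]
  ring

lemma aug_mapDomain (y1 : R12 p) :
    aug p (MonoidAlgebra.mapDomain (emb12 p) y1) = aug12 p y1 := by
  induction y1 using MonoidAlgebra.induction_linear with
  | zero => simp
  | add a b ha hb => rw [MonoidAlgebra.mapDomain_add, map_add, map_add, ha, hb]
  | single g a => rw [MonoidAlgebra.mapDomain_single, aug_single, aug12_single]

lemma coeff_shift3 (x : RG p) (h3 : of ℤ (Gp p) (s3 p) * x = x) (t : Gp p) :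
    x.coeff (s3 p * t) = x.coeff t := by
  have h : (of ℤ (Gp p) (s3 p) * x).coeff (s3 p * t) = x.coeff (s3 p * t) := by rw [h3]
  rw [MonoidAlgebra.of_apply] at h
  rw [MonoidAlgebra.coeff_single_mul_apply, inv_mul_cancel_left, one_mul] at h
  exact h.symm

lemma coeff_shift4 (x : RG p) (h4 : of ℤ (Gp p) (s4 p) * x = x) (t : Gp p) :
    x.coeff (s4 p * t) = x.coeff t := by
  have h : (of ℤ (Gp p) (s4 p) * x).coeff (s4 p * t) = x.coeff (s4 p * t) := by rw [h4]
  rw [MonoidAlgebra.of_apply] at h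
  rw [MonoidAlgebra.coeff_single_mul_apply, inv_mul_cancel_left, one_mul] at h
  exact h.symm

lemma coeff_shift_e34 (x : RG p) (h3 : of ℤ (Gp p) (s3 p) * x = x)
    (h4 : of ℤ (Gp p) (s4 p) * x = x) (v : ZMod p × ZMod p) (t : Gp p) :
    x.coeff (e34 p v * t) = x.coeff t := by
  have key3 : ∀ (j : ℕ) (u : Gp p), x.coeff (s3 p ^ j * u) = x.coeff u := by
    intro j
    induction j with
    | zero => intro u; rw [pow_zero, one_mul]
    | succ n ih =>
      intro u
      rw [pow_succ', mul_assoc]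
      rw [coeff_shift3 p x h3]
      exact ih u
  have key4 : ∀ (j : ℕ) (u : Gp p), x.coeff (s4 p ^ j * u) = x.coeff u := by
    intro j
    induction j with
    | zero => intro u; rw [pow_zero, one_mul]
    | succ n ih =>
      intro u
      rw [pow_succ', mul_assoc]
      rw [coeff_shift4 p x h4]
      exact ih u
  rw [e34_eq_pow, mul_assoc, key3, key4]

/-- the main structural lemma: a `G₃₄`-invariant element of `Z[G]` lies in
`N₃₄ · Z[G₁₂]`. -/
lemma invariant_eq_N34_mul (x : RG p) (h3 : of ℤ (Gp p) (s3 p) * x = x)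
    (h4 : of ℤ (Gp p) (s4 p) * x = x) :
    ∃ y1 : R12 p, x = N34 p * MonoidAlgebra.mapDomainRingHom ℤ (emb12 p) y1 := by
  refine ⟨MonoidAlgebra.comapDomain (emb12 p) (emb12_inj p) x, ?_⟩
  set y1 : R12 p :=
    MonoidAlgebra.comapDomain (emb12 p) (emb12_inj p) x with hy1
  have hrh : MonoidAlgebra.mapDomainRingHom ℤ (emb12 p) y1 = MonoidAlgebra.mapDomain (emb12 p) y1 :=
    rfl
  rw [hrh]
  set z : RG p := MonoidAlgebra.mapDomain (emb12 p) y1 with hz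
  ext t
  rw [N34_eq, Finset.sum_mul, MonoidAlgebra.coeff_sum, Finsupp.finset_sum_apply]
  obtain ⟨a, b, c, d⟩ := t
  have ht : (⟨a, b, c, d⟩ : ZMod p × ZMod p × ZMod p × ZMod p) =
      Multiplicative.ofAdd ((a, b, c, d) : ZMod p × ZMod p × ZMod p × ZMod p) := rfl
  have hterm : ∀ v : ZMod p × ZMod p,
      (of ℤ (Gp p) (e34 p v) * z).coeff (Multiplicative.ofAdd ((a, b, c, d) :
        ZMod p × ZMod p × ZMod p × ZMod p)) = z.coeff ((e34 p v)⁻¹ *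
        Multiplicative.ofAdd ((a, b, c, d) : ZMod p × ZMod p × ZMod p × ZMod p)) := by
    intro v
    rw [MonoidAlgebra.of_apply, MonoidAlgebra.coeff_single_mul_apply, one_mul]
  rw [ht]
  simp only [hterm]
  rw [Finset.sum_eq_single (c, d)]
  · have harg : (e34 p (c, d))⁻¹ *
        Multiplicative.ofAdd ((a, b, c, d) : ZMod p × ZMod p × ZMod p × ZMod p) =
        emb12 p (Multiplicative.ofAdd ((a, b) : ZMod p × ZMod p)) := by
      rw [e34, ← ofAdd_neg, ← ofAdd_add]
      show Multiplicative.ofAdd _ = Multiplicative.ofAdd ((a, b, 0, 0) :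
        ZMod p × ZMod p × ZMod p × ZMod p)
      congr 1
      simp [Prod.ext_iff]
    rw [harg, hz, MonoidAlgebra.coeff_mapDomain, Finsupp.mapDomain_apply (emb12_inj p), hy1,
        MonoidAlgebra.coeff_comapDomain, Finsupp.comapDomain_apply]
    have hsplit : Multiplicative.ofAdd ((a, b, c, d) : ZMod p × ZMod p × ZMod p × ZMod p) =
        e34 p (c, d) * emb12 p (Multiplicative.ofAdd ((a, b) : ZMod p × ZMod p)) := by
      show Multiplicative.ofAdd ((a, b, c, d) : ZMod p × ZMod p × ZMod p × ZMod p) =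
        Multiplicative.ofAdd ((0, 0, c, d) : ZMod p × ZMod p × ZMod p × ZMod p) *
          Multiplicative.ofAdd ((a, b, 0, 0) : ZMod p × ZMod p × ZMod p × ZMod p)
      rw [← ofAdd_add]
      congr 1
      simp [Prod.ext_iff]
    rw [hsplit, coeff_shift_e34 p x h3 h4]
  · intro v _ hv
    rw [hz, MonoidAlgebra.coeff_mapDomain]
    apply Finsupp.mapDomain_notin_range
    rintro ⟨w, hw⟩
    have h31 := congrArg (fun u => (Multiplicative.toAdd u).2.2.1) hw
    have h32 := congrArg (fun u => (Multiplicative.toAdd u).2.2.2) hw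
    simp only [emb12, e34] at h31 h32
    have hc : v.1 = c := by
      have : (0 : ZMod p) = -v.1 + c := h31
      rw [eq_comm, neg_add_eq_zero] at this
      exact this
    have hd : v.2 = d := by
      have : (0 : ZMod p) = -v.2 + d := h32
      rw [eq_comm, neg_add_eq_zero] at this
      exact this
    exact hv (Prod.ext hc hd)
  · intro habs
    exact absurd (Finset.mem_univ _) habs

/-! ### The cyclic divisibility argument -/

lemma c1g_pow (k : ℕ) : c1g p ^ k = Multiplicative.ofAdd ((k : ZMod p)) := by
  rw [c1g, ← ofAdd_nsmul]
  congr 1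
  simp [nsmul_eq_mul]

lemma A2C_prop (v : ↥(A2C p)) : (v : RCp p) * (of ℤ (Cpt p) (c1g p) - 1) = 0 := by
  have h : dcmap p (v : RCp p) = 0 := v.2
  rwa [dcmap, LinearMap.toSpanSingleton_apply, smul_eq_mul] at h

lemma actA2C_trivial (x : Cpt p) (v : ↥(A2C p)) : of ℤ (Cpt p) x • v = v := by
  apply Subtype.ext
  rw [SetLike.val_smul, smul_eq_mul]
  have hx : x = c1g p ^ (Multiplicative.toAdd x).val := by
    rw [c1g_pow]
    conv_lhs => rw [show x = Multiplicative.ofAdd (Multiplicative.toAdd x) from rfl]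
    exact congrArg Multiplicative.ofAdd (ZMod.natCast_rightInverse _).symm
  have hdvd : (of ℤ (Cpt p) (c1g p) - 1) ∣ (of ℤ (Cpt p) x - 1) := by
    rw [hx, map_pow]
    simpa using sub_dvd_pow_sub_pow (of ℤ (Cpt p) (c1g p)) 1 (Multiplicative.toAdd x).val
  obtain ⟨tq, htq⟩ := hdvd
  have hz := A2C_prop p v
  linear_combination (v : RCp p) * htq + tq * hz

lemma s3_pow_p : s3 p ^ p = 1 := by
  refine ofAdd_pow_p p _ ?_
  rw [Prod.smul_mk, Prod.smul_mk, Prod.smul_mk, zmod_p_smul, zmod_p_smul]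
  rfl

lemma ccyc_sum (hp : p.Prime) :
    ∑ k ∈ Finset.range p, ccyc p (c1g p) (c1g p ^ k) = NCe p := by
  haveI : Fact (1 < p) := ⟨hp.one_lt⟩
  have hterm : ∀ k ∈ Finset.range p,
      ccyc p (c1g p) (c1g p ^ k) = if k = p - 1 then NCe p else 0 := by
    intro k hk
    rw [Finset.mem_range] at hk
    rw [ccyc, c1g_pow]
    simp only [toAdd_ofAdd, ZMod.val_cast_of_lt hk,
      show Multiplicative.toAdd (c1g p) = (1 : ZMod p) from rfl, ZMod.val_one]
    by_cases hcase : k = p - 1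
    · rw [if_pos (by omega), if_pos hcase]
    · rw [if_neg (by omega), if_neg hcase]
  rw [Finset.sum_congr rfl hterm, Finset.sum_ite_eq' (Finset.range p) (p - 1)
    (fun _ => NCe p), if_pos (Finset.mem_range.mpr (by have := hp.pos; omega))]

/-- evaluation of the `A₂(⟨σ⟩)`-component at the identity group element. -/
def psiZ : ↥(A2C p) →+ ℤ where
  toFun v := (v : RCp p).coeff (1 : Cpt p)
  map_zero' := rfl
  map_add' := fun a b => by
    show ((a : RCp p) + (b : RCp p)).coeff 1 = (a : RCp p).coeff 1 + (b : RCp p).coeff 1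
    exact Finsupp.add_apply _ _ _

lemma psiZ_NCe (hp : p.Prime) : psiZ p (NCe p) = 1 := by
  show (NN p (c1g p)).coeff (1 : Cpt p) = 1
  rw [NN, MonoidAlgebra.coeff_sum, Finsupp.finset_sum_apply]
  rw [Finset.sum_eq_single 0]
  · simp [MonoidAlgebra.of_apply, MonoidAlgebra.coeff_single, Finsupp.single_apply, MonoidAlgebra.one_def]
  · intro k hk hk0
    rw [Finset.mem_range] at hk
    rw [← map_pow, MonoidAlgebra.of_apply, MonoidAlgebra.coeff_single, Finsupp.single_apply, if_neg]
    intro hcon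
    have : (k : ZMod p) = 0 := by
      have := congrArg Multiplicative.toAdd (c1g_pow p k ▸ hcon)
      simpa using this
    rw [ZMod.natCast_eq_zero_iff] at this
    exact hk0 (Nat.eq_zero_of_dvd_of_lt this hk)
  · intro habs
    exact absurd (Finset.mem_range.mpr hp.pos) habs

lemma p_dvd_of_coboundary (hp : p.Prime) (H : Subgroup (Gp p)) (hH : G34sub p ≤ H) (n : ℕ)
    (hcb : IsTwoCoboundary (resAct H (actQ p))
      fun h h' => n • ωc p (h : Gp p) (h' : Gp p)) :
    p ∣ n := by
  obtain ⟨cb, hc⟩ := hcb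
  set s3H : ↥H := ⟨s3 p, hH (s3_mem p)⟩ with hs3H
  have hproj : ∀ g g' : ↥H, n • (-(ccyc p (π3 p (g : Gp p)) (π3 p (g' : Gp p)))) =
      (cb g').2.1.1 - (cb (g * g')).2.1.1 + (cb g).2.1.1 := by
    intro g g'
    have h0 := congrArg (fun q : Qc p => q.2.1.1) (hc g g')
    simp only [resAct] at h0
    have hL : ((n • ωc p (g : Gp p) (g' : Gp p)).2.1.1 : ↥(A2C p)) =
        n • (-(ccyc p (π3 p (g : Gp p)) (π3 p (g' : Gp p)))) := rfl
    have hR : ((actQ p (g : Gp p) (cb g') - cb (g * g') + cb g).2.1.1 : ↥(A2C p)) =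
        of ℤ (Cpt p) (π3 p (g : Gp p)) • (cb g').2.1.1 - (cb (g * g')).2.1.1 + (cb g).2.1.1 :=
      rfl
    rw [hL, hR, actA2C_trivial] at h0
    exact h0
  have hpow3 : ∀ k : ℕ, π3 p ((s3H : Gp p) ^ k) = c1g p ^ k := by
    intro k
    rw [map_pow]
    rfl
  have heq : ∀ k : ℕ, n • (-(ccyc p (c1g p) (c1g p ^ k))) =
      (cb (s3H ^ k)).2.1.1 - (cb (s3H ^ (k + 1))).2.1.1 + (cb s3H).2.1.1 := by
    intro k
    have h1 := hproj s3H (s3H ^ k)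
    rw [show ((s3H ^ k : ↥H) : Gp p) = (s3H : Gp p) ^ k from SubmonoidClass.coe_pow _ _,
      hpow3, show π3 p (s3H : Gp p) = c1g p from rfl] at h1
    rw [show s3H * s3H ^ k = s3H ^ (k + 1) from (pow_succ' _ _).symm] at h1
    exact h1
  have hsum := Finset.sum_congr rfl (fun k (_ : k ∈ Finset.range p) => heq k)
  rw [← Finset.smul_sum, Finset.sum_neg_distrib, ccyc_sum p hp] at hsum
  have hRHS : ∑ k ∈ Finset.range p,
      ((cb (s3H ^ k)).2.1.1 - (cb (s3H ^ (k + 1))).2.1.1 + (cb s3H).2.1.1) =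
      p • (cb s3H).2.1.1 := by
    rw [Finset.sum_add_distrib, Finset.sum_range_sub'
      (fun k => (cb (s3H ^ k)).2.1.1), Finset.sum_const, Finset.card_range]
    have hp0 : s3H ^ p = s3H ^ 0 := by
      apply Subtype.ext
      rw [SubmonoidClass.coe_pow, SubmonoidClass.coe_pow]
      rw [s3_pow_p p, pow_zero]
    rw [hp0, sub_self, zero_add]
  rw [hRHS] at hsum
  have hfin := congrArg (psiZ p) hsum
  rw [map_nsmul, map_nsmul, map_neg, psiZ_NCe p hp] at hfin
  have : -(n : ℤ) = (p : ℤ) * (psiZ p (cb s3H).2.1.1) := by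
    simpa [nsmul_eq_mul] using hfin
  have hdvd : (p : ℤ) ∣ (n : ℤ) := by
    rw [← dvd_neg, this]
    exact Dvd.intro _ rfl
  exact_mod_cast hdvd

lemma G34_le_of_mem (H : Subgroup (Gp p)) (hH : H ∈ HH p) : G34sub p ≤ H := by
  rcases Set.mem_insert_iff.mp hH with rfl | ⟨τ, hτ, rfl⟩
  · exact le_top
  · exact Subgroup.closure_mono (fun x hx => Set.mem_insert_of_mem _ hx)

lemma p_dvd_nOrd (hp : p.Prime) (H : Subgroup (Gp p)) (hH : H ∈ HH p) : p ∣ nOrd p H := by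
  rw [nOrd]
  by_cases hne : {n : ℕ | 0 < n ∧
      IsTwoCoboundary (resAct H (actQ p))
        fun h h' => n • ωc p (h : Gp p) (h' : Gp p)}.Nonempty
  · have hmem := Nat.sInf_mem hne
    exact p_dvd_of_coboundary p hp H (G34_le_of_mem p H hH) _ hmem.2
  · rw [Set.not_nonempty_iff_eq_empty] at hne
    rw [hne, Nat.sInf_empty]
    exact dvd_zero p

/-! ### The fixed-point equation -/

/-- extraction of the `I[G]`-component of `M_ω`. -/
def Vhom : Mc p →+ RG p where
  toFun x := (x.2 : RG p)
  map_zero' := rfl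
  map_add' := fun _ _ => rfl

lemma Vhom_actM (go : Gp p) (x : Mc p) :
    Vhom p (actM p go x) = of ℤ (Gp p) go * Vhom p x := rfl

lemma Vhom_fHof (H : Subgroup (Gp p)) (zz : ↥H → Kc p × Kc p) (h : ↥H) :
    Vhom p (fHof p H zz h) = (nOrd p H) • (of ℤ (Gp p) (h : Gp p) - 1) := by
  show ((nOrd p H • dH p H h : ↥(IG p)) : RG p) = _
  rw [AddSubmonoidClass.coe_nsmul]
  rfl

lemma fixed_eq (zH : ∀ H : ↥(HH p), (↥(H.val) → Kc p × Kc p)) (m : MC p) (g : Gp p)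
    (hg : g ∈ G34sub p)
    (hm : actMFull p (fun H => fHof p H.val (zH H)) g m = m) :
    of ℤ (Gp p) g * (m.1.2 : RG p) +
      (∑ᶠ H : ↥(HH p), Finsupp.sum (m.2 H) fun c a =>
        a • ((nOrd p H.val) • of ℤ (Gp p) (Quotient.out c))) * (of ℤ (Gp p) g - 1)
      = (m.1.2 : RG p) := by
  classical
  haveI : Fintype ↥(HH p) := Fintype.ofFinite _
  have hgc : ∀ (H : ↥(HH p)) (c : Gp p ⧸ (H : Subgroup (Gp p))), g • c = c := by
    intro H c
    obtain ⟨x, rfl⟩ := QuotientGroup.mk_surjective c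
    show QuotientGroup.mk (g * x) = QuotientGroup.mk x
    rw [QuotientGroup.eq]
    have hx : (g * x)⁻¹ * x = g⁻¹ := by
      rw [mul_inv_rev, mul_assoc, mul_comm g⁻¹ x, inv_mul_cancel_left]
    rw [hx]
    exact (G34_le_of_mem p H.1 H.2) (inv_mem hg)
  have hsimp : ∀ x : Gp p, x⁻¹ * (g * x) = g := fun x => by
    rw [mul_comm g x, inv_mul_cancel_left]
  have h0 := congrArg (fun z : MC p => Vhom p z.1) hm
  simp only [actMFull, map_add] at h0
  rw [finsum_eq_sum_of_fintype, map_sum] at h0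
  simp only [map_finsuppSum, map_zsmul, Vhom_actM, Vhom_fHof] at h0
  simp only [hgc, hsimp] at h0
  rw [finsum_eq_sum_of_fintype, Finset.sum_mul]
  have hVy : Vhom p m.1 = (m.1.2 : RG p) := rfl
  rw [hVy] at h0
  rw [show (∑ H : ↥(HH p), (Finsupp.sum (m.2 H) fun c a =>
      a • ((nOrd p H.val) • of ℤ (Gp p) (Quotient.out c))) * (of ℤ (Gp p) g - 1)) =
      ∑ H : ↥(HH p), Finsupp.sum (m.2 H) fun c a =>
        a • (of ℤ (Gp p) (Quotient.out c) * ((nOrd p H.val) • (of ℤ (Gp p) g - 1))) from ?_]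
  · exact h0
  · refine Finset.sum_congr rfl fun H _ => ?_
    rw [Finsupp.sum_mul]
    refine Finsupp.sum_congr fun c _ => ?_
    rw [smul_mul_assoc, smul_mul_assoc, mul_smul_comm]

end Aux

theorem statement14 (p : ℕ) [NeZero p] (hp : p.Prime) (hodd : p ≠ 2)
    (zH : ∀ H : ↥(HH p), (↥(H.val) → Kc p × Kc p))
    (hz : ∀ H : ↥(HH p), IsOneCocycle (resAct H.val (actM p)) (fHof p H.val (zH H)))
    (m : MC p)
    (hm : ∀ g ∈ G34sub p, actMFull p (fun H => fHof p H.val (zH H)) g m = m) :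
    ∃ (y1 : R12 p) (y2 : RG p),
      (m.1.2 : RG p) = N34 p * (MonoidAlgebra.mapDomainRingHom ℤ (emb12 p) y1)
          - (p : ℤ) • y2 ∧
      aug p y2 = p * aug12 p y1 := by
  classical
  haveI : Fintype ↥(HH p) := Fintype.ofFinite _
  set y : RG p := (m.1.2 : RG p) with hyd
  set w : RG p := ∑ᶠ H : ↥(HH p), Finsupp.sum (m.2 H) fun c a =>
    a • ((nOrd p H.val) • of ℤ (Gp p) (Quotient.out c)) with hwd
  have h3 : of ℤ (Gp p) (s3 p) * (y + w) = y + w := by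
    have hk := fixed_eq p zH m (s3 p) (s3_mem p) (hm _ (s3_mem p))
    rw [← hyd, ← hwd] at hk
    linear_combination hk
  have h4 : of ℤ (Gp p) (s4 p) * (y + w) = y + w := by
    have hk := fixed_eq p zH m (s4 p) (s4_mem p) (hm _ (s4_mem p))
    rw [← hyd, ← hwd] at hk
    linear_combination hk
  obtain ⟨y1, hy1⟩ := invariant_eq_N34_mul p (y + w) h3 h4
  set y2 : RG p := ∑ᶠ H : ↥(HH p), Finsupp.sum (m.2 H) fun c a =>
    a • ((nOrd p H.val / p) • of ℤ (Gp p) (Quotient.out c)) with hy2d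
  have hw2 : w = (p : ℤ) • y2 := by
    rw [hwd, hy2d, finsum_eq_sum_of_fintype, finsum_eq_sum_of_fintype, Finset.smul_sum]
    refine Finset.sum_congr rfl fun H _ => ?_
    rw [Finsupp.smul_sum]
    refine Finsupp.sum_congr fun c _ => ?_
    obtain ⟨k, hk⟩ := p_dvd_nOrd p hp H.1 H.2
    rw [hk, Nat.mul_div_cancel_left k hp.pos, mul_smul, Nat.cast_smul_eq_nsmul]
    exact smul_comm _ _ _
  have hy : y = N34 p * (MonoidAlgebra.mapDomainRingHom ℤ (emb12 p) y1) - (p : ℤ) • y2 := by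
    rw [← hw2]
    linear_combination hy1
  refine ⟨y1, y2, hy, ?_⟩
  have haug_y : aug p y = 0 := m.1.2.2
  have haugmap : aug p (MonoidAlgebra.mapDomainRingHom ℤ (emb12 p) y1) = aug12 p y1 := by
    rw [show (MonoidAlgebra.mapDomainRingHom ℤ (emb12 p) y1 : RG p) =
      MonoidAlgebra.mapDomain (emb12 p) y1 from rfl]
    exact aug_mapDomain p y1
  have h5 := congrArg (aug p) hy
  rw [haug_y, map_sub, map_mul, aug_N34, haugmap, map_zsmul, smul_eq_mul] at h5
  have hp0 : (p : ℤ) ≠ 0 := Nat.cast_ne_zero.mpr hp.pos.ne'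
  have h6 : (p : ℤ) * aug p y2 = (p : ℤ) * ((p : ℤ) * aug12 p y1) := by
    linear_combination h5
  exact mul_left_cancel₀ hp0 h6

end
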